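/- Let G be an abelian torsion group such that the n-torsion subgroup G[n] is finite for every positive integer n, and such that for every prime p the Tate module T_p G = lim← G[p^m] (inverse limit along multiplication-by-p maps) vanishes. Then every p-primary component G(p) of G is finite. -/
import Mathlib

/-- An antitone chain of nonempty finite sets has nonempty intersection. -/
lemma chain_inter_nonempty {α : Type*} (S : ℕ → Set α) (hfin : (S 0).Finite)
    (hdec : ∀ k, S (k + 1) ⊆ S k) (hne : ∀ k, (S k).Nonempty) :
    (⋂ k, S k).Nonempty := by
  have hsub : ∀ j k, j ≤ k → S k ⊆ S j := by
    intro j k h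
    induction h with
    | refl => exact le_refl _
    | step h ih => exact (hdec _).trans ih
  have hfins : ∀ k, (S k).Finite := fun k => hfin.subset (hsub 0 k (Nat.zero_le _))
  have hrange : (Set.range fun k => (S k).ncard).Nonempty := ⟨(S 0).ncard, ⟨0, rfl⟩⟩
  obtain ⟨N, hN⟩ := Nat.sInf_mem hrange
  have hmin : ∀ k, (S N).ncard ≤ (S k).ncard := by
    intro k
    calc (S N).ncard = sInf (Set.range fun k => (S k).ncard) := hN
    _ ≤ (S k).ncard := Nat.sInf_le ⟨k, rfl⟩
  obtain ⟨x, hx⟩ := hne N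
  refine ⟨x, Set.mem_iInter.2 fun k => ?_⟩
  rcases le_or_gt k N with h | h
  · exact hsub k N h hx
  · have h1 : S k ⊆ S N := hsub N k h.le
    have h2 : S k = S N := Set.eq_of_subset_of_ncard_le h1 (hmin k) (hfins N)
    rw [h2]; exact hx

theorem stmt_2 (G : Type*) [AddCommGroup G]
    (htors : ∀ g : G, ∃ n : ℕ, 0 < n ∧ n • g = 0)
    (hfin : ∀ n : ℕ, 0 < n → {g : G | n • g = 0}.Finite)
    (hTate : ∀ p : ℕ, p.Prime → ∀ x : ℕ → G,
      (∀ m, p ^ m • x m = 0) → (∀ m, p • x (m + 1) = x m) → ∀ m, x m = 0) :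
    ∀ p : ℕ, p.Prime → {g : G | ∃ k : ℕ, p ^ k • g = 0}.Finite := by
  classical
  intro p hp
  by_contra hinf
  have hinf : Set.Infinite {g : G | ∃ k : ℕ, p ^ k • g = 0} := hinf
  have hpow : ∀ m : ℕ, ({g : G | p ^ m • g = 0}).Finite :=
    fun m => hfin (p ^ m) (pow_pos hp.pos m)
  -- Step 1: elements of arbitrarily large exact order
  have hexact : ∀ k : ℕ, ∃ g : G, p ^ (k + 1) • g = 0 ∧ p ^ k • g ≠ 0 := by
    intro k
    obtain ⟨g, hg, hgk⟩ := (hinf.diff (hpow k)).nonempty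
    obtain ⟨j, hj⟩ := hg
    have hex : ∃ j, p ^ j • g = 0 := ⟨j, hj⟩
    set m := Nat.find hex with hm
    have hm0 : p ^ m • g = 0 := Nat.find_spec hex
    have hkm : k < m := by
      by_contra hle
      push_neg at hle
      exact hgk (by
        show p ^ k • g = 0
        have hkm' : k - m + m = k := by omega
        calc p ^ k • g = p ^ (k - m + m) • g := by rw [hkm']
        _ = p ^ (k - m) • p ^ m • g := by rw [smul_smul, ← pow_add]
        _ = 0 := by rw [hm0, smul_zero])
    refine ⟨p ^ (m - 1 - k) • g, ?_, ?_⟩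
    · rw [smul_smul, ← pow_add]
      have : k + 1 + (m - 1 - k) = m := by omega
      rw [this, hm0]
    · rw [smul_smul, ← pow_add]
      have : k + (m - 1 - k) = m - 1 := by omega
      rw [this]
      have := Nat.find_min hex (m := m - 1) (by omega)
      exact this
  -- The "infinitely divisible" predicate
  set InD : ℕ → G → Prop := fun m x => ∀ k, ∃ g, p ^ (m + k) • g = 0 ∧ p ^ k • g = x with hInD
  -- Step 2: a nonzero element of D 1
  have hE : ∃ x0 : G, x0 ≠ 0 ∧ InD 1 x0 := by
    set E : ℕ → Set G := fun k => {x | x ≠ 0 ∧ ∃ g, p ^ (k + 1) • g = 0 ∧ p ^ k • g = x}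
      with hEdef
    have hEsub : ∀ k, E k ⊆ {x : G | p ^ 1 • x = 0} := by
      rintro k x ⟨hx0, g, hg1, hg2⟩
      show p ^ 1 • x = 0
      rw [← hg2, smul_smul, ← pow_add]
      rw [show 1 + k = k + 1 by omega, hg1]
    have hEfin : (E 0).Finite := (hpow 1).subset (hEsub 0)
    have hEdec : ∀ k, E (k + 1) ⊆ E k := by
      rintro k x ⟨hx0, g, hg1, hg2⟩
      refine ⟨hx0, p • g, ?_, ?_⟩
      · rw [smul_smul]
        rw [show p ^ (k + 1) * p = p ^ (k + 1 + 1) by ring, hg1]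
      · rw [smul_smul]
        rw [show p ^ k * p = p ^ (k + 1) by ring, hg2]
    have hEne : ∀ k, (E k).Nonempty := by
      intro k
      obtain ⟨g, hg1, hg2⟩ := hexact k
      exact ⟨p ^ k • g, hg2, g, hg1, rfl⟩
    obtain ⟨x0, hx0⟩ := chain_inter_nonempty E hEfin hEdec hEne
    rw [Set.mem_iInter] at hx0
    refine ⟨x0, (hx0 0).1, fun k => ?_⟩
    obtain ⟨_, g, hg1, hg2⟩ := hx0 k
    exact ⟨g, by rw [show 1 + k = k + 1 by omega]; exact hg1, hg2⟩
  obtain ⟨x0, hx0ne, hx0D⟩ := hE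
  -- Step 3: surjectivity of p : D (m+1) → D m
  have step : ∀ m x, InD m x → ∃ y, p • y = x ∧ InD (m + 1) y := by
    intro m x hx
    set F : ℕ → Set G := fun k =>
      {y | p • y = x ∧ ∃ g, p ^ (m + 1 + k) • g = 0 ∧ p ^ k • g = y} with hFdef
    have hFsub : ∀ k, F k ⊆ {y : G | p ^ (m + 1) • y = 0} := by
      rintro k y ⟨hy, g, hg1, hg2⟩
      show p ^ (m + 1) • y = 0
      rw [← hg2, smul_smul, ← pow_add, show m + 1 + k = m + 1 + k from rfl, hg1]
    have hFfin : (F 0).Finite := (hpow (m + 1)).subset (hFsub 0)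
    have hFdec : ∀ k, F (k + 1) ⊆ F k := by
      rintro k y ⟨hy, g, hg1, hg2⟩
      refine ⟨hy, p • g, ?_, ?_⟩
      · rw [smul_smul, show p ^ (m + 1 + k) * p = p ^ (m + 1 + (k + 1)) by ring, hg1]
      · rw [smul_smul, show p ^ k * p = p ^ (k + 1) by ring, hg2]
    have hFne : ∀ k, (F k).Nonempty := by
      intro k
      obtain ⟨g, hg1, hg2⟩ := hx (k + 1)
      refine ⟨p ^ k • g, ?_, g, ?_, rfl⟩
      · rw [smul_smul, show p * p ^ k = p ^ (k + 1) by ring, hg2]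
      · rw [show m + 1 + k = m + (k + 1) by omega]; exact hg1
    obtain ⟨y, hy⟩ := chain_inter_nonempty F hFfin hFdec hFne
    rw [Set.mem_iInter] at hy
    exact ⟨y, (hy 0).1, fun k => (hy k).2⟩
  choose f hf1 hf2 using step
  -- Step 4: build the compatible sequence
  let Y : (n : ℕ) → {z : G // InD (n + 1) z} := fun n =>
    Nat.rec ⟨x0, hx0D⟩ (fun n prev => ⟨f (n + 1) prev.1 prev.2, hf2 (n + 1) prev.1 prev.2⟩) n
  have hYsucc : ∀ n, p • (Y (n + 1)).1 = (Y n).1 := fun n => hf1 (n + 1) (Y n).1 (Y n).2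
  have hYtor : ∀ n, p ^ (n + 1) • (Y n).1 = 0 := by
    intro n
    obtain ⟨g, hg1, hg2⟩ := (Y n).2 0
    simp only [pow_zero, one_smul] at hg2
    rw [← hg2]
    rw [show n + 1 = n + 1 + 0 by omega] at hg1 ⊢
    exact hg1
  have hx0p : p • x0 = 0 := by
    obtain ⟨g, hg1, hg2⟩ := hx0D 0
    simp only [pow_zero, one_smul] at hg2
    rw [← hg2, ← pow_one p]
    rw [show (1 : ℕ) = 1 + 0 by omega] at hg1 ⊢
    exact hg1
  set X : ℕ → G := fun m => Nat.rec 0 (fun n _ => (Y n).1) m with hX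
  have h1 : ∀ m, p ^ m • X m = 0 := by
    intro m
    cases m with
    | zero => simp [hX]
    | succ n => exact hYtor n
  have h2 : ∀ m, p • X (m + 1) = X m := by
    intro m
    cases m with
    | zero => exact hx0p
    | succ n => exact hYsucc n
  have := hTate p hp X h1 h2 1
  exact hx0ne this
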